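/- Let d ≥ 1, let f ∈ L¹(ℝ^d), and let λ > 0. Then there exists a collection 𝓕 of pairwise disjoint dyadic cubes with ∑_{Q∈𝓕} |Q| ≤ ‖f‖₁/λ such that for every dyadic cube T one has ∑_{Q} (Δ_Q f)²·|Q| ≤ (2^d·λ)²·|T|, where the sum is over all dyadic cubes Q ⊆ T that are not contained in any cube of 𝓕, and Δ_Q f := (|Q|^{−1} ∑_{Q' child of Q} |[f]_{Q'} − [f]_Q|²|Q'|)^{1/2}. -/

import Mathlib

open MeasureTheory
open scoped ENNReal

noncomputable section

/-- A dyadic cube in `ℝ^d`, recorded by its scale `m` and corner `2^m • l`: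
the cube `∏_i [2^m l_i, 2^m (l_i + 1))`. -/
structure DyadicCube (d : ℕ) where
  m : ℤ
  l : Fin d → ℤ

/-- The subset of `ℝ^d` corresponding to a dyadic cube. -/
def DyadicCube.set {d : ℕ} (Q : DyadicCube d) : Set (Fin d → ℝ) :=
  Set.univ.pi fun i => Set.Ico ((2:ℝ) ^ Q.m * (Q.l i : ℝ)) ((2:ℝ) ^ Q.m * ((Q.l i : ℝ) + 1))

/-- The dyadic children of `Q`, indexed by `c : Fin d → Bool` (there are `2^d` of them);
each has half the sidelength of `Q`. -/
def DyadicCube.child {d : ℕ} (Q : DyadicCube d) (c : Fin d → Bool) : DyadicCube d :=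
  ⟨Q.m - 1, fun i => 2 * Q.l i + (if c i then 1 else 0)⟩

/-- The average `[f]_Q = |Q|⁻¹ ∫_Q f` of `f` over a dyadic cube `Q`. -/
def dyadicAvg {d : ℕ} (f : (Fin d → ℝ) → ℝ) (Q : DyadicCube d) : ℝ :=
  ((volume Q.set).toReal)⁻¹ * ∫ x in Q.set, f x

/-- The martingale average `E_Q f = |[f]_Q|`. -/
def dyadicE {d : ℕ} (f : (Fin d → ℝ) → ℝ) (Q : DyadicCube d) : ℝ :=
  |dyadicAvg f Q|

/-- The martingale difference
`Δ_Q f = (|Q|⁻¹ ∑_{Q' child of Q} |[f]_{Q'} - [f]_Q|² |Q'|)^{1/2}`. -/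
def dyadicDelta {d : ℕ} (f : (Fin d → ℝ) → ℝ) (Q : DyadicCube d) : ℝ :=
  Real.sqrt (((volume Q.set).toReal)⁻¹ *
    ∑ c : Fin d → Bool,
      |dyadicAvg f (Q.child c) - dyadicAvg f Q| ^ 2 * (volume (Q.child c).set).toReal)

namespace DyadicCube
variable {d : ℕ}

lemma ext_ml {A B : DyadicCube d} (h1 : A.m = B.m) (h2 : A.l = B.l) : A = B := by
  cases A; cases B; simp_all

lemma two_zpow_pos (m : ℤ) : (0:ℝ) < 2 ^ m := zpow_pos two_pos m

lemma lo_lt_hi (Q : DyadicCube d) (i : Fin d) :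
    (2:ℝ) ^ Q.m * (Q.l i : ℝ) < (2:ℝ) ^ Q.m * ((Q.l i : ℝ) + 1) := by
  nlinarith [two_zpow_pos Q.m]

lemma measurableSet_set (Q : DyadicCube d) : MeasurableSet Q.set :=
  MeasurableSet.univ_pi fun i => measurableSet_Ico

lemma set_nonempty (Q : DyadicCube d) : Q.set.Nonempty := by
  refine ⟨fun i => (2:ℝ) ^ Q.m * (Q.l i : ℝ), fun i _ => ?_⟩
  exact ⟨le_refl _, lo_lt_hi Q i⟩

lemma volume_set (Q : DyadicCube d) :
    volume Q.set = ENNReal.ofReal (((2:ℝ) ^ Q.m) ^ d) := by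
  rw [DyadicCube.set, volume_pi_pi]
  have h : ∀ i : Fin d, volume (Set.Ico ((2:ℝ) ^ Q.m * (Q.l i : ℝ))
      ((2:ℝ) ^ Q.m * ((Q.l i : ℝ) + 1))) = ENNReal.ofReal ((2:ℝ) ^ Q.m) := by
    intro i
    rw [Real.volume_Ico]
    congr 1
    ring
  simp only [h, Finset.prod_const, Finset.card_univ, Fintype.card_fin]
  rw [← ENNReal.ofReal_pow (le_of_lt (two_zpow_pos Q.m))]

lemma volReal (Q : DyadicCube d) :
    (volume Q.set).toReal = ((2:ℝ) ^ Q.m) ^ d := by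
  rw [volume_set, ENNReal.toReal_ofReal (by positivity)]

lemma volReal_pos (Q : DyadicCube d) : 0 < (volume Q.set).toReal := by
  rw [volReal]; positivity

lemma volume_lt_top (Q : DyadicCube d) : volume Q.set < ⊤ := by
  rw [volume_set]; exact ENNReal.ofReal_lt_top

lemma coord_subset {A B : DyadicCube d} (h : A.set ⊆ B.set) (i : Fin d) :
    (2:ℝ) ^ B.m * (B.l i : ℝ) ≤ (2:ℝ) ^ A.m * (A.l i : ℝ) ∧
    (2:ℝ) ^ A.m * ((A.l i : ℝ) + 1) ≤ (2:ℝ) ^ B.m * ((B.l i : ℝ) + 1) := by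
  rw [DyadicCube.set, DyadicCube.set, Set.univ_pi_subset_univ_pi_iff] at h
  rcases h with h | ⟨j, hj⟩
  · exact (Set.Ico_subset_Ico_iff (lo_lt_hi A i)).mp (h i)
  · exact absurd hj (Set.Nonempty.ne_empty ⟨_, le_refl _, lo_lt_hi A j⟩)

lemma m_le_of_subset (hd : 1 ≤ d) {A B : DyadicCube d} (h : A.set ⊆ B.set) :
    A.m ≤ B.m := by
  obtain ⟨h1, h2⟩ := coord_subset h ⟨0, hd⟩
  have hlen : (2:ℝ) ^ A.m ≤ (2:ℝ) ^ B.m := by nlinarith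
  exact le_of_not_gt fun hlt => absurd hlen (not_le.mpr (zpow_lt_zpow_right₀ one_lt_two hlt))

lemma eq_of_subset_of_m_eq {A B : DyadicCube d} (h : A.set ⊆ B.set)
    (hm : A.m = B.m) : A = B := by
  refine ext_ml hm (funext fun i => ?_)
  obtain ⟨h1, h2⟩ := coord_subset h i
  rw [hm] at h1 h2
  have hp := two_zpow_pos B.m
  have e1 : (B.l i : ℝ) ≤ A.l i := le_of_mul_le_mul_left (by linarith) hp
  have e2 : (A.l i : ℝ) + 1 ≤ (B.l i : ℝ) + 1 := le_of_mul_le_mul_left (by linarith) hp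
  have : (A.l i : ℝ) = B.l i := by linarith
  exact_mod_cast this

lemma subset_of_m_le_of_inter {A B : DyadicCube d} (hm : A.m ≤ B.m)
    (hx : (A.set ∩ B.set).Nonempty) : A.set ⊆ B.set := by
  obtain ⟨x, hxA, hxB⟩ := hx
  set e : ℕ := (B.m - A.m).toNat with he
  have hB : (2:ℝ) ^ B.m = (2:ℝ) ^ A.m * (2:ℝ) ^ e := by
    rw [← zpow_natCast (2:ℝ) e, ← zpow_add₀ (two_ne_zero) A.m]
    congr 1
    omega
  have hp := two_zpow_pos A.m
  intro y hy
  intro i _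
  have hxAi := hxA i (Set.mem_univ i)
  have hxBi := hxB i (Set.mem_univ i)
  have hyi := hy i (Set.mem_univ i)
  simp only [Set.mem_Ico] at hxAi hxBi hyi ⊢
  -- integer inequalities
  have k1 : ((2:ℤ) ^ e) * B.l i ≤ A.l i := by
    have hr : (2:ℝ) ^ A.m * ((2:ℝ) ^ e * B.l i) < (2:ℝ) ^ A.m * ((A.l i : ℝ) + 1) := by
      calc (2:ℝ) ^ A.m * ((2:ℝ) ^ e * B.l i) = (2:ℝ) ^ B.m * B.l i := by rw [hB]; ring
        _ ≤ x i := hxBi.1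
        _ < _ := hxAi.2
    have hr2 : ((2:ℝ) ^ e * B.l i : ℝ) < (A.l i : ℝ) + 1 := lt_of_mul_lt_mul_left hr (le_of_lt hp)
    have : (((2:ℤ) ^ e * B.l i : ℤ) : ℝ) < ((A.l i + 1 : ℤ) : ℝ) := by push_cast; linarith
    have := Int.cast_lt.mp this
    omega
  have k2 : A.l i + 1 ≤ ((2:ℤ) ^ e) * (B.l i + 1) := by
    have hr : (2:ℝ) ^ A.m * (A.l i : ℝ) < (2:ℝ) ^ A.m * ((2:ℝ) ^ e * ((B.l i : ℝ) + 1)) := by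
      calc (2:ℝ) ^ A.m * (A.l i : ℝ) ≤ x i := hxAi.1
        _ < (2:ℝ) ^ B.m * ((B.l i : ℝ) + 1) := hxBi.2
        _ = _ := by rw [hB]; ring
    have hr2 : (A.l i : ℝ) < (2:ℝ) ^ e * ((B.l i : ℝ) + 1) := lt_of_mul_lt_mul_left hr (le_of_lt hp)
    have : ((A.l i : ℤ) : ℝ) < (((2:ℤ) ^ e * (B.l i + 1) : ℤ) : ℝ) := by push_cast; linarith
    have := Int.cast_lt.mp this
    omega
  constructor
  · calc (2:ℝ) ^ B.m * (B.l i : ℝ) = (2:ℝ) ^ A.m * (((2:ℤ)^e * B.l i : ℤ) : ℝ) := by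
          rw [hB]; push_cast; ring
      _ ≤ (2:ℝ) ^ A.m * (A.l i : ℝ) := by
          apply mul_le_mul_of_nonneg_left _ (le_of_lt hp)
          exact_mod_cast k1
      _ ≤ y i := hyi.1
  · calc y i < (2:ℝ) ^ A.m * ((A.l i : ℝ) + 1) := hyi.2
      _ ≤ (2:ℝ) ^ A.m * (((2:ℤ)^e * (B.l i + 1) : ℤ) : ℝ) := by
          apply mul_le_mul_of_nonneg_left _ (le_of_lt hp)
          have : ((A.l i + 1 : ℤ) : ℝ) ≤ (((2:ℤ)^e * (B.l i + 1) : ℤ) : ℝ) := by exact_mod_cast k2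
          push_cast at this ⊢; linarith
      _ = (2:ℝ) ^ B.m * ((B.l i : ℝ) + 1) := by rw [hB]; push_cast; ring


-- NEW PART
lemma half_zpow (m : ℤ) : (2:ℝ) ^ m = (2:ℝ) ^ (m - 1) * 2 := by
  rw [← zpow_add_one₀ (two_ne_zero : (2:ℝ) ≠ 0) (m - 1)]
  congr 1
  omega

lemma mem_set_iff {Q : DyadicCube d} {x : Fin d → ℝ} :
    x ∈ Q.set ↔ ∀ i, (2:ℝ) ^ Q.m * (Q.l i : ℝ) ≤ x i ∧ x i < (2:ℝ) ^ Q.m * ((Q.l i : ℝ) + 1) := by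
  simp [DyadicCube.set, Set.mem_pi, Set.mem_Ico]

lemma child_subset (Q : DyadicCube d) (c : Fin d → Bool) : (Q.child c).set ⊆ Q.set := by
  intro x hx
  rw [mem_set_iff] at hx ⊢
  intro i
  obtain ⟨h1, h2⟩ := hx i
  simp only [child] at h1 h2
  have h2p := half_zpow Q.m
  have hpos := two_zpow_pos (Q.m - 1)
  rcases Bool.eq_false_or_eq_true (c i) with h | h <;>
    simp only [h, if_true, if_false, Bool.false_eq_true] at h1 h2 <;>
    push_cast at h1 h2 <;>
    rw [h2p] <;>
    constructor <;> nlinarith [hpos]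

lemma exists_child_mem {Q : DyadicCube d} {x : Fin d → ℝ} (hx : x ∈ Q.set) :
    ∃ c, x ∈ (Q.child c).set := by
  refine ⟨fun i => decide ((2:ℝ) ^ (Q.m - 1) * (2 * (Q.l i : ℝ) + 1) ≤ x i), ?_⟩
  rw [mem_set_iff] at hx ⊢
  intro i
  obtain ⟨h1, h2⟩ := hx i
  have h2p := half_zpow Q.m
  have hpos := two_zpow_pos (Q.m - 1)
  rw [h2p] at h1 h2
  simp only [child]
  by_cases h : (2:ℝ) ^ (Q.m - 1) * (2 * (Q.l i : ℝ) + 1) ≤ x i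
  · have hdec : decide ((2:ℝ) ^ (Q.m - 1) * (2 * (Q.l i : ℝ) + 1) ≤ x i) = true :=
      decide_eq_true h
    simp only [hdec, if_true]
    push_cast
    constructor
    · linarith
    · nlinarith [hpos]
  · have hdec : decide ((2:ℝ) ^ (Q.m - 1) * (2 * (Q.l i : ℝ) + 1) ≤ x i) = false :=
      decide_eq_false h
    simp only [hdec, Bool.false_eq_true, if_false]
    push_cast
    push_neg at h
    constructor
    · nlinarith [hpos]
    · linarith

lemma child_disjoint (Q : DyadicCube d) {c c' : Fin d → Bool} (h : c ≠ c') :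
    Disjoint (Q.child c).set (Q.child c').set := by
  rw [Set.disjoint_left]
  intro x hx hx'
  obtain ⟨i, hi⟩ : ∃ i, c i ≠ c' i := by
    by_contra hc; push_neg at hc; exact h (funext hc)
  rw [mem_set_iff] at hx hx'
  obtain ⟨a1, a2⟩ := hx i
  obtain ⟨b1, b2⟩ := hx' i
  simp only [child] at a1 a2 b1 b2
  have hpos := two_zpow_pos (Q.m - 1)
  rcases Bool.eq_false_or_eq_true (c i) with h1 | h1 <;>
    rcases Bool.eq_false_or_eq_true (c' i) with h2 | h2 <;>
      simp only [h1, h2, if_true, if_false, Bool.false_eq_true, ne_eq] at hi a1 a2 b1 b2 <;>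
      push_cast at a1 a2 b1 b2 <;>
      first
        | exact hi trivial
        | nlinarith [hpos]

lemma iUnion_child (Q : DyadicCube d) : (⋃ c : Fin d → Bool, (Q.child c).set) = Q.set := by
  apply Set.Subset.antisymm
  · exact Set.iUnion_subset fun c => child_subset Q c
  · intro x hx
    obtain ⟨c, hc⟩ := exists_child_mem hx
    exact Set.mem_iUnion.mpr ⟨c, hc⟩

lemma child_volReal (Q : DyadicCube d) (c : Fin d → Bool) :
    (volume (Q.child c).set).toReal = ((2:ℝ) ^ (Q.m - 1)) ^ d := volReal _

lemma sum_child_volReal (Q : DyadicCube d) :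
    ∑ c : Fin d → Bool, (volume (Q.child c).set).toReal = (volume Q.set).toReal := by
  simp only [child_volReal, Finset.sum_const, Finset.card_univ]
  rw [volReal]
  have : Fintype.card (Fin d → Bool) = 2 ^ d := by simp
  rw [this, half_zpow Q.m, mul_pow, nsmul_eq_mul]
  push_cast
  ring

-- ancestors
def par (Q : DyadicCube d) : DyadicCube d := ⟨Q.m + 1, fun i => (Q.l i) / 2⟩

lemma subset_par (Q : DyadicCube d) : Q.set ⊆ (par Q).set := by
  intro x hx
  rw [mem_set_iff] at hx ⊢
  intro i
  obtain ⟨h1, h2⟩ := hx i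
  have hpos := two_zpow_pos Q.m
  have h2p : (2:ℝ) ^ (Q.m + 1) = (2:ℝ) ^ Q.m * 2 := by
    rw [← zpow_add_one₀ (two_ne_zero : (2:ℝ) ≠ 0) Q.m]
  have k1 : (2 : ℤ) * (Q.l i / 2) ≤ Q.l i := by omega
  have k2 : Q.l i + 1 ≤ 2 * (Q.l i / 2) + 2 := by omega
  have k1r : (2:ℝ) * ((Q.l i / 2 : ℤ) : ℝ) ≤ (Q.l i : ℝ) := by exact_mod_cast k1
  have k2r : (Q.l i : ℝ) + 1 ≤ 2 * ((Q.l i / 2 : ℤ) : ℝ) + 2 := by exact_mod_cast k2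
  simp only [par]
  constructor
  · rw [h2p]; nlinarith
  · rw [h2p]; nlinarith

def anc (Q : DyadicCube d) (k : ℕ) : DyadicCube d := par^[k] Q

lemma anc_zero (Q : DyadicCube d) : anc Q 0 = Q := rfl

lemma anc_succ (Q : DyadicCube d) (k : ℕ) : anc Q (k + 1) = par (anc Q k) := by
  simp [anc, Function.iterate_succ_apply']

lemma anc_m (Q : DyadicCube d) (k : ℕ) : (anc Q k).m = Q.m + k := by
  induction k with
  | zero => simp [anc_zero]
  | succ n ih => rw [anc_succ, par]; simp; omega

lemma subset_anc (Q : DyadicCube d) (k : ℕ) : Q.set ⊆ (anc Q k).set := by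
  induction k with
  | zero => rw [anc_zero]
  | succ n ih => rw [anc_succ]; exact ih.trans (subset_par _)

lemma anc_add (Q : DyadicCube d) (a b : ℕ) : anc Q (a + b) = anc (anc Q a) b := by
  simp [anc, Function.iterate_add_apply, Nat.add_comm a b]

lemma superset_eq_anc (hd : 1 ≤ d) {Q P : DyadicCube d} (h : Q.set ⊆ P.set) :
    P = anc Q (P.m - Q.m).toNat := by
  have hm : Q.m ≤ P.m := m_le_of_subset hd h
  set A := anc Q (P.m - Q.m).toNat with hA
  have hAm : A.m = P.m := by rw [hA, anc_m]; omega
  have hQA : Q.set ⊆ A.set := subset_anc Q _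
  obtain ⟨x, hx⟩ := set_nonempty Q
  have h1 : P.set ⊆ A.set := subset_of_m_le_of_inter (le_of_eq hAm.symm) ⟨x, h hx, hQA hx⟩
  exact eq_of_subset_of_m_eq h1 hAm.symm

lemma eq_child_of_subset {P T : DyadicCube d} (h : P.set ⊆ T.set) (hm : P.m = T.m - 1) :
    ∃ c, P = T.child c := by
  refine ⟨fun i => decide (P.l i = 2 * T.l i + 1), ?_⟩
  refine ext_ml (by simp [child, hm]) (funext fun i => ?_)
  obtain ⟨h1, h2⟩ := coord_subset h i
  rw [hm] at h1 h2
  have h2p := half_zpow T.m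
  have hpos := two_zpow_pos (T.m - 1)
  have k1 : (2:ℤ) * T.l i ≤ P.l i := by
    have h1' : (2:ℝ) ^ (T.m - 1) * (2 * (T.l i : ℝ)) ≤ (2:ℝ) ^ (T.m - 1) * (P.l i : ℝ) := by
      calc (2:ℝ) ^ (T.m - 1) * (2 * (T.l i : ℝ)) = (2:ℝ) ^ T.m * (T.l i : ℝ) := by
            rw [h2p]; ring
        _ ≤ _ := h1
    have := le_of_mul_le_mul_left h1' hpos
    exact_mod_cast this
  have k2 : P.l i + 1 ≤ 2 * T.l i + 2 := by
    have h2' : (2:ℝ) ^ (T.m - 1) * ((P.l i : ℝ) + 1) ≤ (2:ℝ) ^ (T.m - 1) * (2 * (T.l i : ℝ) + 2) := by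
      calc (2:ℝ) ^ (T.m - 1) * ((P.l i : ℝ) + 1) ≤ (2:ℝ) ^ T.m * ((T.l i : ℝ) + 1) := h2
        _ = _ := by rw [h2p]; ring
    have := le_of_mul_le_mul_left h2' hpos
    have : (P.l i : ℝ) + 1 ≤ 2 * (T.l i : ℝ) + 2 := this
    exact_mod_cast this
  simp only [child]
  by_cases hc : P.l i = 2 * T.l i + 1
  · simp [hc]
  · have : P.l i = 2 * T.l i := by omega
    simp [hc, this]

lemma subset_child_of_subset (hd : 1 ≤ d) {Q T : DyadicCube d} (h : Q.set ⊆ T.set)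
    (hm : Q.m < T.m) : ∃ c, Q.set ⊆ (T.child c).set := by
  set P := anc Q (T.m - 1 - Q.m).toNat with hP
  have hPm : P.m = T.m - 1 := by rw [hP, anc_m]; omega
  have hQP : Q.set ⊆ P.set := subset_anc Q _
  obtain ⟨x, hx⟩ := set_nonempty Q
  have hPT : P.set ⊆ T.set := subset_of_m_le_of_inter (by omega) ⟨x, hQP hx, h hx⟩
  obtain ⟨c, hc⟩ := eq_child_of_subset hPT hPm
  exact ⟨c, hc ▸ hQP⟩


end DyadicCube

open DyadicCube

section Analysis
variable {d : ℕ} {f : (Fin d → ℝ) → ℝ}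

lemma avg_mul_vol (f : (Fin d → ℝ) → ℝ) (Q : DyadicCube d) :
    dyadicAvg f Q * (volume Q.set).toReal = ∫ x in Q.set, f x := by
  rw [dyadicAvg, mul_comm, ← mul_assoc, mul_inv_cancel₀ (volReal_pos Q).ne', one_mul]

lemma integral_child_sum (hf : Integrable f volume) (Q : DyadicCube d) :
    ∫ x in Q.set, f x = ∑ c : Fin d → Bool, ∫ x in (Q.child c).set, f x := by
  rw [← iUnion_child Q,
    integral_iUnion (fun c => measurableSet_set _)
      (fun c c' h => child_disjoint Q h) hf.integrableOn]
  exact tsum_fintype _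

lemma sum_child_avg_vol (hf : Integrable f volume) (Q : DyadicCube d) :
    ∑ c : Fin d → Bool, dyadicAvg f (Q.child c) * (volume (Q.child c).set).toReal =
      dyadicAvg f Q * (volume Q.set).toReal := by
  rw [avg_mul_vol]
  rw [integral_child_sum hf Q]
  exact Finset.sum_congr rfl fun c _ => avg_mul_vol f _

lemma abs_avg_le_avg_abs (f : (Fin d → ℝ) → ℝ) (Q : DyadicCube d) :
    |dyadicAvg f Q| ≤ dyadicAvg (fun x => |f x|) Q := by
  rw [dyadicAvg, dyadicAvg, abs_mul, abs_inv, abs_of_pos (volReal_pos Q)]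
  gcongr
  simpa [Real.norm_eq_abs] using
    norm_integral_le_integral_norm (μ := volume.restrict Q.set) f

lemma avg_abs_nonneg (f : (Fin d → ℝ) → ℝ) (Q : DyadicCube d) :
    0 ≤ dyadicAvg (fun x => |f x|) Q := by
  rw [dyadicAvg]
  apply mul_nonneg (inv_nonneg.mpr (volReal_pos Q).le)
  exact setIntegral_nonneg (measurableSet_set Q) fun x _ => abs_nonneg _

lemma vol_child_eq (Q : DyadicCube d) (c : Fin d → Bool) :
    (volume Q.set).toReal = 2 ^ d * (volume (Q.child c).set).toReal := by
  rw [volReal, child_volReal]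
  have h2p : (2:ℝ) ^ Q.m = (2:ℝ) ^ (Q.m - 1) * 2 := by
    rw [← zpow_add_one₀ (two_ne_zero : (2:ℝ) ≠ 0) (Q.m - 1)]
    congr 1; omega
  rw [h2p, mul_pow]
  ring

lemma avg_abs_child_le (hf : Integrable f volume) (Q : DyadicCube d) (c : Fin d → Bool) :
    dyadicAvg (fun x => |f x|) (Q.child c) ≤ 2 ^ d * dyadicAvg (fun x => |f x|) Q := by
  have hint : ∫ x in (Q.child c).set, |f x| ≤ ∫ x in Q.set, |f x| := by
    apply setIntegral_mono_set hf.abs.integrableOn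
    · exact Filter.Eventually.of_forall fun x => abs_nonneg _
    · exact Filter.Eventually.of_forall (child_subset Q c)
  have hv := volReal_pos (Q.child c)
  have hvQ := volReal_pos Q
  have key : ((volume (Q.child c).set).toReal)⁻¹ = 2 ^ d * ((volume Q.set).toReal)⁻¹ := by
    rw [vol_child_eq Q c, mul_inv]
    field_simp
  calc dyadicAvg (fun x => |f x|) (Q.child c)
      = ((volume (Q.child c).set).toReal)⁻¹ * ∫ x in (Q.child c).set, |f x| := rfl
    _ ≤ ((volume (Q.child c).set).toReal)⁻¹ * ∫ x in Q.set, |f x| :=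
        mul_le_mul_of_nonneg_left hint (inv_nonneg.mpr hv.le)
    _ = 2 ^ d * (((volume Q.set).toReal)⁻¹ * ∫ x in Q.set, |f x|) := by rw [key]; ring
    _ = 2 ^ d * dyadicAvg (fun x => |f x|) Q := rfl

lemma avg_abs_le_total (hf : Integrable f volume) (Q : DyadicCube d) :
    dyadicAvg (fun x => |f x|) Q * (volume Q.set).toReal ≤ ∫ x, |f x| := by
  rw [avg_mul_vol]
  apply setIntegral_le_integral hf.abs
  exact Filter.Eventually.of_forall fun x => abs_nonneg _

lemma delta_sq_vol (f : (Fin d → ℝ) → ℝ) (Q : DyadicCube d) :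
    dyadicDelta f Q ^ 2 * (volume Q.set).toReal =
      ∑ c : Fin d → Bool,
        (dyadicAvg f (Q.child c) - dyadicAvg f Q) ^ 2 * (volume (Q.child c).set).toReal := by
  have hnn : 0 ≤ ((volume Q.set).toReal)⁻¹ *
      ∑ c : Fin d → Bool,
        |dyadicAvg f (Q.child c) - dyadicAvg f Q| ^ 2 * (volume (Q.child c).set).toReal := by
    apply mul_nonneg (inv_nonneg.mpr (volReal_pos Q).le)
    apply Finset.sum_nonneg
    intro c _
    exact mul_nonneg (sq_nonneg _) (volReal_pos _).le
  rw [dyadicDelta, Real.sq_sqrt hnn]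
  have hv := (volReal_pos Q).ne'
  rw [mul_comm, ← mul_assoc, mul_inv_cancel₀ hv, one_mul]
  exact Finset.sum_congr rfl fun c _ => by rw [sq_abs]

lemma delta_identity (hf : Integrable f volume) (Q : DyadicCube d) :
    dyadicDelta f Q ^ 2 * (volume Q.set).toReal =
      (∑ c : Fin d → Bool,
        dyadicAvg f (Q.child c) ^ 2 * (volume (Q.child c).set).toReal) -
      dyadicAvg f Q ^ 2 * (volume Q.set).toReal := by
  rw [delta_sq_vol]
  have expand : ∀ c : Fin d → Bool,
      (dyadicAvg f (Q.child c) - dyadicAvg f Q) ^ 2 * (volume (Q.child c).set).toReal =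
      dyadicAvg f (Q.child c) ^ 2 * (volume (Q.child c).set).toReal
        - 2 * dyadicAvg f Q * (dyadicAvg f (Q.child c) * (volume (Q.child c).set).toReal)
        + dyadicAvg f Q ^ 2 * (volume (Q.child c).set).toReal := fun c => by ring
  rw [Finset.sum_congr rfl fun c _ => expand c]
  rw [Finset.sum_add_distrib, Finset.sum_sub_distrib, ← Finset.mul_sum, ← Finset.mul_sum]
  rw [sum_child_avg_vol hf, sum_child_volReal]
  ring

lemma delta_term_nonneg (f : (Fin d → ℝ) → ℝ) (Q : DyadicCube d) :
    0 ≤ dyadicDelta f Q ^ 2 * (volume Q.set).toReal :=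
  mul_nonneg (sq_nonneg _) (volReal_pos Q).le

end Analysis

namespace DyadicCube
variable {d : ℕ}

instance : Countable (DyadicCube d) := by
  have hinj : Function.Injective (fun Q : DyadicCube d => (Q.m, Q.l)) := by
    intro A B h
    simp only [Prod.mk.injEq] at h
    exact ext_ml h.1 h.2
  exact Function.Injective.countable hinj

lemma int_bounds_of_subset {Q T : DyadicCube d} (h : Q.set ⊆ T.set) (hm : Q.m ≤ T.m)
    (i : Fin d) :
    (2:ℤ) ^ (T.m - Q.m).toNat * T.l i ≤ Q.l i ∧
    Q.l i + 1 ≤ (2:ℤ) ^ (T.m - Q.m).toNat * (T.l i + 1) := by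
  obtain ⟨h1, h2⟩ := coord_subset h i
  set e : ℕ := (T.m - Q.m).toNat with he
  have hB : (2:ℝ) ^ T.m = (2:ℝ) ^ Q.m * (2:ℝ) ^ e := by
    rw [← zpow_natCast (2:ℝ) e, ← zpow_add₀ (two_ne_zero : (2:ℝ) ≠ 0) Q.m]
    congr 1
    omega
  have hp := two_zpow_pos Q.m
  constructor
  · have hr : (2:ℝ) ^ Q.m * (((2:ℤ) ^ e * T.l i : ℤ) : ℝ) ≤ (2:ℝ) ^ Q.m * ((Q.l i : ℤ) : ℝ) := by
      push_cast
      calc (2:ℝ) ^ Q.m * ((2:ℝ) ^ e * (T.l i : ℝ)) = (2:ℝ) ^ T.m * (T.l i : ℝ) := by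
            rw [hB]; ring
        _ ≤ _ := h1
    have := le_of_mul_le_mul_left hr hp
    exact_mod_cast this
  · have hr : (2:ℝ) ^ Q.m * (((Q.l i + 1 : ℤ)) : ℝ) ≤
        (2:ℝ) ^ Q.m * (((2:ℤ) ^ e * (T.l i + 1) : ℤ) : ℝ) := by
      push_cast
      calc (2:ℝ) ^ Q.m * ((Q.l i : ℝ) + 1) ≤ (2:ℝ) ^ T.m * ((T.l i : ℝ) + 1) := h2
        _ = _ := by rw [hB]; ring
    have := le_of_mul_le_mul_left hr hp
    exact_mod_cast this

lemma finite_subcubes (hd : 1 ≤ d) (T : DyadicCube d) (a : ℤ) :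
    {Q : DyadicCube d | Q.set ⊆ T.set ∧ a ≤ Q.m}.Finite := by
  set K : ℤ := 2 ^ (T.m - a).toNat with hK
  set C : Fin d → ℤ := fun i => K * (|T.l i| + 1) with hC
  have htarget : Set.Finite {p : ℤ × (Fin d → ℤ) |
      p.1 ∈ Set.Icc a T.m ∧ ∀ i, p.2 i ∈ Set.Icc (-(C i)) (C i)} := by
    apply Set.Finite.subset (Set.Finite.prod (Set.finite_Icc a T.m)
      (Set.Finite.pi fun i => Set.finite_Icc (-(C i)) (C i)))
    intro p hp
    exact ⟨hp.1, fun i _ => hp.2 i⟩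
  have hinj : Function.Injective (fun Q : DyadicCube d => (Q.m, Q.l)) := by
    intro A B h
    simp only [Prod.mk.injEq] at h
    exact ext_ml h.1 h.2
  apply Set.Finite.subset (Set.Finite.preimage hinj.injOn htarget)
  rintro Q ⟨hsub, ha⟩
  have hm : Q.m ≤ T.m := m_le_of_subset hd hsub
  refine ⟨⟨ha, hm⟩, fun i => ?_⟩
  obtain ⟨k1, k2⟩ := int_bounds_of_subset hsub hm i
  set A : ℤ := 2 ^ (T.m - Q.m).toNat with hA
  have hA1 : 1 ≤ A := one_le_pow₀ (by norm_num)
  have hAK : A ≤ K := by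
    rw [hA, hK]
    exact pow_le_pow_right₀ (by norm_num) (by omega)
  have hint1 : 0 ≤ K * |T.l i| - A * |T.l i| := by
    have := mul_le_mul_of_nonneg_right hAK (abs_nonneg (T.l i))
    linarith
  have hint2 : 0 ≤ A * T.l i + A * |T.l i| := by
    have := mul_le_mul_of_nonneg_left (neg_abs_le (T.l i)) (by linarith : (0:ℤ) ≤ A)
    linarith
  have hint3 : A * T.l i ≤ A * |T.l i| :=
    mul_le_mul_of_nonneg_left (le_abs_self (T.l i)) (by linarith)
  constructor
  · simp only [hC]; nlinarith
  · simp only [hC]; nlinarith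

lemma exists_maximal (hd : 1 ≤ d) {f : (Fin d → ℝ) → ℝ} (hf : Integrable f volume)
    {lam : ℝ} (hlam : 0 < lam) {Q : DyadicCube d}
    (hQ : lam < dyadicAvg (fun x => |f x|) Q) :
    ∃ F : DyadicCube d, Q.set ⊆ F.set ∧ lam < dyadicAvg (fun x => |f x|) F ∧
      ∀ P : DyadicCube d, F.set ⊆ P.set → F ≠ P → dyadicAvg (fun x => |f x|) P ≤ lam := by
  classical
  set g : DyadicCube d → ℝ := fun R => dyadicAvg (fun x => |f x|) R with hg
  set I : ℝ := ∫ x, |f x| with hI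
  -- eventually the averages over ancestors drop below lam
  obtain ⟨n, hn⟩ : ∃ n : ℕ, I / lam < 2 ^ n := pow_unbounded_of_one_lt (I / lam) one_lt_two
  set N : ℕ := n + (-Q.m).toNat with hN
  have hbig : ∀ k : ℕ, N ≤ k → g (anc Q k) ≤ lam := by
    intro k hk
    have hmk : (n : ℤ) ≤ Q.m + k := by omega
    have h1 : (2:ℝ) ^ (n:ℤ) ≤ (2:ℝ) ^ (Q.m + k) := by
      apply zpow_le_zpow_right₀ one_le_two hmk
    have h2 : (1:ℝ) ≤ (2:ℝ) ^ (Q.m + k) := by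
      calc (1:ℝ) = 2 ^ (0:ℤ) := by norm_num
        _ ≤ _ := zpow_le_zpow_right₀ one_le_two (by omega)
    have hv : (volume (anc Q k).set).toReal = ((2:ℝ) ^ (Q.m + k)) ^ d := by
      rw [volReal, anc_m]
    have hvbig : I / lam < (volume (anc Q k).set).toReal := by
      rw [hv]
      calc I / lam < 2 ^ n := hn
        _ = (2:ℝ) ^ (n:ℤ) := by rw [zpow_natCast]
        _ ≤ (2:ℝ) ^ (Q.m + k) := h1
        _ ≤ ((2:ℝ) ^ (Q.m + k)) ^ d := le_self_pow₀ h2 (by omega)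
    have htot := avg_abs_le_total hf (anc Q k)
    have hvpos : 0 < (volume (anc Q k).set).toReal := by rw [hv]; positivity
    by_contra hcon
    push_neg at hcon
    have : lam * (volume (anc Q k).set).toReal ≤ I := by
      calc lam * (volume (anc Q k).set).toReal
          ≤ g (anc Q k) * (volume (anc Q k).set).toReal := by
            apply mul_le_mul_of_nonneg_right (le_of_lt hcon) hvpos.le
        _ ≤ I := htot
    have : I / lam ≥ (volume (anc Q k).set).toReal := by
      rw [ge_iff_le, le_div_iff₀ hlam]
      linarith
    linarith
  -- findGreatest
  set P : ℕ → Prop := fun k => lam < g (anc Q k) with hP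
  have h0 : P 0 := by simp only [hP, anc_zero]; exact hQ
  set k0 : ℕ := Nat.findGreatest P N with hk0
  have hk0P : P k0 := Nat.findGreatest_spec (Nat.zero_le N) h0
  refine ⟨anc Q k0, subset_anc Q k0, hk0P, ?_⟩
  intro R hsub hne
  have hmQ : (anc Q k0).m ≤ R.m := m_le_of_subset hd hsub
  have hRanc := superset_eq_anc hd hsub
  set j : ℕ := (R.m - (anc Q k0).m).toNat with hj
  have hj1 : 1 ≤ j := by
    rcases Nat.eq_zero_or_pos j with hj0 | h
    · exfalso
      apply hne
      rw [hRanc, hj0, anc_zero]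
    · exact h
  have hReq : R = anc Q (k0 + j) := by rw [anc_add]; exact hRanc
  rw [hReq]
  by_cases hcase : k0 + j ≤ N
  · have hlt : k0 < k0 + j := by omega
    have := Nat.findGreatest_is_greatest (P := P) (n := N) (k := k0 + j) (by rw [← hk0]; omega) hcase
    simpa [hP, not_lt] using this
  · exact hbig (k0 + j) (by omega)


end DyadicCube

/-- Weak-type (1,1) endpoint of the Carleson embedding for the dyadic martingale
difference operator: for `f ∈ L¹` and `λ > 0` there is a collection `𝓕` of pairwise
disjoint dyadic cubes of total measure at most `‖f‖₁/λ` such that for every dyadic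
cube `T`, summing `(Δ_Q f)² |Q|` over the dyadic cubes `Q ⊆ T` not contained in any
cube of `𝓕` gives at most `(2^d λ)² |T|`. -/
theorem dyadic_delta_weak_type (d : ℕ) (hd : 1 ≤ d)
    (f : (Fin d → ℝ) → ℝ) (hf : Integrable f volume) (lam : ℝ) (hlam : 0 < lam) :
    ∃ 𝓕 : Set (DyadicCube d),
      (𝓕.Pairwise fun A C => Disjoint A.set C.set) ∧
      (∑' Q : 𝓕, volume (Q : DyadicCube d).set ≤ ENNReal.ofReal ((∫ x, |f x|) / lam)) ∧
      ∀ T : DyadicCube d,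
        ∑' Q : {Q : DyadicCube d // Q.set ⊆ T.set ∧ ∀ F ∈ 𝓕, ¬ Q.set ⊆ F.set},
            ENNReal.ofReal
              ((dyadicDelta f (Q : DyadicCube d)) ^ 2 *
                (volume (Q : DyadicCube d).set).toReal) ≤
          ENNReal.ofReal ((2 ^ d * lam) ^ 2) * volume T.set := by
  classical
  set g : DyadicCube d → ℝ := fun R => dyadicAvg (fun x => |f x|) R with hg
  set 𝓕 : Set (DyadicCube d) :=
    {F | lam < g F ∧ ∀ P : DyadicCube d, F.set ⊆ P.set → F ≠ P → g P ≤ lam} with h𝓕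
  have good_le : ∀ Q : DyadicCube d, (∀ F ∈ 𝓕, ¬ Q.set ⊆ F.set) → g Q ≤ lam := by
    intro Q hQ
    by_contra h
    push_neg at h
    obtain ⟨F, h1, h2, h3⟩ := exists_maximal hd hf hlam h
    exact hQ F ⟨h2, h3⟩ h1
  have hdisj : 𝓕.Pairwise fun A C => Disjoint A.set C.set := by
    intro A hA C hC hne
    by_contra hdis
    rw [Set.not_disjoint_iff] at hdis
    obtain ⟨x, hxA, hxC⟩ := hdis
    rcases le_total A.m C.m with h | h
    · have hsub := subset_of_m_le_of_inter h ⟨x, hxA, hxC⟩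
      exact absurd hC.1 (not_lt.mpr (hA.2 C hsub hne))
    · have hsub := subset_of_m_le_of_inter h ⟨x, hxC, hxA⟩
      exact absurd hA.1 (not_lt.mpr (hC.2 A hsub hne.symm))
  refine ⟨𝓕, hdisj, ?_, ?_⟩
  · -- measure bound
    have key : ∀ F : DyadicCube d, F ∈ 𝓕 →
        ENNReal.ofReal lam * volume F.set ≤ ∫⁻ x in F.set, ENNReal.ofReal |f x| := by
      intro F hF
      have hv := volReal_pos F
      have h1 : lam * (volume F.set).toReal ≤ ∫ x in F.set, |f x| := by
        have h2 : lam * (volume F.set).toReal ≤ g F * (volume F.set).toReal :=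
          mul_le_mul_of_nonneg_right hF.1.le hv.le
        calc lam * (volume F.set).toReal ≤ g F * (volume F.set).toReal := h2
          _ = ∫ x in F.set, |f x| := avg_mul_vol _ F
      calc ENNReal.ofReal lam * volume F.set
          = ENNReal.ofReal lam * ENNReal.ofReal ((volume F.set).toReal) := by
            rw [ENNReal.ofReal_toReal (volume_lt_top F).ne]
        _ = ENNReal.ofReal (lam * (volume F.set).toReal) := by
            rw [ENNReal.ofReal_mul hlam.le]
        _ ≤ ENNReal.ofReal (∫ x in F.set, |f x|) := ENNReal.ofReal_le_ofReal h1
        _ = ∫⁻ x in F.set, ENNReal.ofReal |f x| :=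
            ofReal_integral_eq_lintegral_ofReal hf.abs.integrableOn
              (Filter.Eventually.of_forall fun x => abs_nonneg _)
    have hsum : ENNReal.ofReal lam * ∑' F : 𝓕, volume (F : DyadicCube d).set ≤
        ENNReal.ofReal (∫ x, |f x|) := by
      rw [← ENNReal.tsum_mul_left]
      calc ∑' F : 𝓕, ENNReal.ofReal lam * volume (F : DyadicCube d).set
          ≤ ∑' F : 𝓕, ∫⁻ x in (F : DyadicCube d).set, ENNReal.ofReal |f x| :=
            ENNReal.tsum_le_tsum fun F => key F F.2
        _ = ∫⁻ x in ⋃ F : 𝓕, (F : DyadicCube d).set, ENNReal.ofReal |f x| := by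
            refine (lintegral_iUnion (fun F => measurableSet_set _) ?_ _).symm
            intro i j hij
            exact hdisj i.2 j.2 fun h => hij (Subtype.ext h)
        _ ≤ ∫⁻ x, ENNReal.ofReal |f x| := setLIntegral_le_lintegral _ _
        _ = ENNReal.ofReal (∫ x, |f x|) :=
            (ofReal_integral_eq_lintegral_ofReal hf.abs
              (Filter.Eventually.of_forall fun x => abs_nonneg _)).symm
    rw [ENNReal.ofReal_div_of_pos hlam]
    rw [ENNReal.le_div_iff_mul_le (Or.inl (by simp [hlam])) (Or.inl ENNReal.ofReal_ne_top)]
    rwa [mul_comm]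
  · -- main bound
    intro T
    set good : DyadicCube d → Prop := fun Q => ∀ F ∈ 𝓕, ¬ Q.set ⊆ F.set with hgood
    set B : ℝ := 2 ^ d * lam with hB
    have hB0 : 0 ≤ B := by positivity
    have childsq : ∀ Q : DyadicCube d, good Q → ∀ c : Fin d → Bool,
        dyadicAvg f (Q.child c) ^ 2 ≤ B ^ 2 := by
      intro Q hQ c
      have h1 : |dyadicAvg f (Q.child c)| ≤ B := by
        calc |dyadicAvg f (Q.child c)| ≤ g (Q.child c) := abs_avg_le_avg_abs f _
          _ ≤ 2 ^ d * g Q := avg_abs_child_le hf Q c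
          _ ≤ 2 ^ d * lam := by
              apply mul_le_mul_of_nonneg_left (good_le Q hQ) (by positivity)
      calc dyadicAvg f (Q.child c) ^ 2 = |dyadicAvg f (Q.child c)| ^ 2 := (sq_abs _).symm
        _ ≤ B ^ 2 := pow_le_pow_left₀ (abs_nonneg _) h1 2
    have upward : ∀ {Q S : DyadicCube d}, Q.set ⊆ S.set → good Q → good S := by
      intro Q S hsub hQ F hF hSF
      exact hQ F hF (hsub.trans hSF)
    have hfin : ∀ (S : DyadicCube d) (N : ℕ),
        Set.Finite {Q : DyadicCube d | Q.set ⊆ S.set ∧ good Q ∧ S.m - N ≤ Q.m} :=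
      fun S N => (finite_subcubes hd S (S.m - N)).subset fun Q hQ => ⟨hQ.1, hQ.2.2⟩
    have key : ∀ N : ℕ, ∀ S : DyadicCube d, good S →
        ∑ Q ∈ (hfin S N).toFinset, dyadicDelta f Q ^ 2 * (volume Q.set).toReal ≤
          (B ^ 2 - dyadicAvg f S ^ 2) * (volume S.set).toReal := by
      intro N
      induction N with
      | zero =>
        intro S hS
        have hset : (hfin S 0).toFinset = {S} := by
          ext Q
          rw [Set.Finite.mem_toFinset, Finset.mem_singleton]
          constructor
          · rintro ⟨hsub, -, hm⟩
            refine eq_of_subset_of_m_eq hsub ?_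
            have := m_le_of_subset hd hsub
            omega
          · rintro rfl
            exact ⟨subset_rfl, hS, by omega⟩
        rw [hset, Finset.sum_singleton, delta_identity hf S]
        have hle : ∑ c : Fin d → Bool,
            dyadicAvg f (S.child c) ^ 2 * (volume (S.child c).set).toReal ≤
            B ^ 2 * (volume S.set).toReal := by
          rw [← sum_child_volReal S, Finset.mul_sum]
          apply Finset.sum_le_sum
          intro c _
          exact mul_le_mul_of_nonneg_right (childsq S hS c) (volReal_pos _).le
        linarith
      | succ n ih =>
        intro S hS
        have hSmem : S ∈ (hfin S (n + 1)).toFinset := by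
          rw [Set.Finite.mem_toFinset]
          refine ⟨subset_rfl, hS, ?_⟩
          push_cast
          omega
        have hdecomp : (hfin S (n + 1)).toFinset.erase S =
            Finset.univ.biUnion fun c : Fin d → Bool => (hfin (S.child c) n).toFinset := by
          ext Q
          rw [Finset.mem_erase, Set.Finite.mem_toFinset, Finset.mem_biUnion]
          constructor
          · rintro ⟨hne, hsub, hQg, hm⟩
            have hmle : Q.m ≤ S.m := m_le_of_subset hd hsub
            have hmlt : Q.m < S.m := by
              rcases lt_or_eq_of_le hmle with h | h
              · exact h
              · exact absurd (eq_of_subset_of_m_eq hsub h) hne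
            obtain ⟨c, hc⟩ := subset_child_of_subset hd hsub hmlt
            refine ⟨c, Finset.mem_univ c, ?_⟩
            rw [Set.Finite.mem_toFinset]
            refine ⟨hc, hQg, ?_⟩
            simp only [DyadicCube.child]
            push_cast at hm ⊢
            omega
          · rintro ⟨c, -, hc⟩
            rw [Set.Finite.mem_toFinset] at hc
            obtain ⟨hsub, hQg, hm⟩ := hc
            have hmle : Q.m ≤ (S.child c).m := m_le_of_subset hd hsub
            simp only [DyadicCube.child] at hmle hm
            refine ⟨?_, hsub.trans (child_subset S c), hQg, by push_cast at hm ⊢; omega⟩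
            intro hQS
            rw [hQS] at hmle
            omega
        have hbidisj : ((Finset.univ : Finset (Fin d → Bool)) : Set (Fin d → Bool)).PairwiseDisjoint
            fun c => (hfin (S.child c) n).toFinset := by
          intro c _ c' _ hcc'
          simp only [Function.onFun]
          rw [Finset.disjoint_left]
          intro Q hQ hQ'
          rw [Set.Finite.mem_toFinset] at hQ hQ'
          obtain ⟨x, hx⟩ := set_nonempty Q
          exact Set.disjoint_left.mp (child_disjoint S hcc') (hQ.1 hx) (hQ'.1 hx)
        have hsum_children : ∀ c : Fin d → Bool,
            ∑ Q ∈ (hfin (S.child c) n).toFinset,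
              dyadicDelta f Q ^ 2 * (volume Q.set).toReal ≤
            (B ^ 2 - dyadicAvg f (S.child c) ^ 2) * (volume (S.child c).set).toReal := by
          intro c
          by_cases hcg : good (S.child c)
          · exact ih (S.child c) hcg
          · have hempty : (hfin (S.child c) n).toFinset = ∅ := by
              rw [Finset.eq_empty_iff_forall_notMem]
              intro Q hQ
              rw [Set.Finite.mem_toFinset] at hQ
              exact hcg (upward hQ.1 hQ.2.1)
            rw [hempty, Finset.sum_empty]
            apply mul_nonneg _ (volReal_pos _).le
            have := childsq S hS c
            linarith
        calc ∑ Q ∈ (hfin S (n + 1)).toFinset, dyadicDelta f Q ^ 2 * (volume Q.set).toReal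
            = dyadicDelta f S ^ 2 * (volume S.set).toReal +
              ∑ Q ∈ (hfin S (n + 1)).toFinset.erase S,
                dyadicDelta f Q ^ 2 * (volume Q.set).toReal :=
              (Finset.add_sum_erase _ _ hSmem).symm
          _ = dyadicDelta f S ^ 2 * (volume S.set).toReal +
              ∑ c : Fin d → Bool, ∑ Q ∈ (hfin (S.child c) n).toFinset,
                dyadicDelta f Q ^ 2 * (volume Q.set).toReal := by
              rw [hdecomp, Finset.sum_biUnion hbidisj]
          _ ≤ dyadicDelta f S ^ 2 * (volume S.set).toReal +
              ∑ c : Fin d → Bool,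
                (B ^ 2 - dyadicAvg f (S.child c) ^ 2) * (volume (S.child c).set).toReal := by
              apply add_le_add le_rfl
              exact Finset.sum_le_sum fun c _ => hsum_children c
          _ = (B ^ 2 - dyadicAvg f S ^ 2) * (volume S.set).toReal := by
              rw [delta_identity hf S]
              have hexp : ∀ c : Fin d → Bool,
                  (B ^ 2 - dyadicAvg f (S.child c) ^ 2) * (volume (S.child c).set).toReal =
                  B ^ 2 * (volume (S.child c).set).toReal -
                    dyadicAvg f (S.child c) ^ 2 * (volume (S.child c).set).toReal :=
                fun c => by ring
              rw [Finset.sum_congr rfl fun c _ => hexp c, Finset.sum_sub_distrib,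
                ← Finset.mul_sum, sum_child_volReal S]
              ring
    -- conclude via tsum = sup over finite subsets
    rw [ENNReal.tsum_eq_iSup_sum]
    apply iSup_le
    intro s
    rcases s.eq_empty_or_nonempty with rfl | ⟨⟨Q0, hQ0⟩, hQ0s⟩
    · simp
    · have hTgood : good T := upward hQ0.1 hQ0.2
      set N : ℕ := s.sup fun Q => (T.m - (Q : DyadicCube d).m).toNat with hN
      have himg : s.image Subtype.val ⊆ (hfin T N).toFinset := by
        intro Q hQ
        rw [Finset.mem_image] at hQ
        obtain ⟨⟨Q', hQ'⟩, hQ's, rfl⟩ := hQ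
        rw [Set.Finite.mem_toFinset]
        refine ⟨hQ'.1, hQ'.2, ?_⟩
        have h1 : (T.m - Q'.m).toNat ≤ N := by
          have h := Finset.le_sup (f := fun Q : {Q : DyadicCube d // Q.set ⊆ T.set ∧
            ∀ F ∈ 𝓕, ¬ Q.set ⊆ F.set} => (T.m - (Q : DyadicCube d).m).toNat) hQ's
          simpa [hN] using h
        have h2 : Q'.m ≤ T.m := m_le_of_subset hd hQ'.1
        show T.m - (N : ℤ) ≤ Q'.m
        omega
      have hreal : ∑ Q ∈ s, dyadicDelta f (Q : DyadicCube d) ^ 2 *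
          (volume (Q : DyadicCube d).set).toReal ≤ B ^ 2 * (volume T.set).toReal := by
        have e1 : ∑ Q ∈ s, dyadicDelta f (Q : DyadicCube d) ^ 2 *
            (volume (Q : DyadicCube d).set).toReal =
            ∑ Q ∈ s.image Subtype.val, dyadicDelta f Q ^ 2 * (volume Q.set).toReal := by
          rw [Finset.sum_image]
          intro x _ y _ h
          exact Subtype.ext h
        rw [e1]
        calc ∑ Q ∈ s.image Subtype.val, dyadicDelta f Q ^ 2 * (volume Q.set).toReal
            ≤ ∑ Q ∈ (hfin T N).toFinset, dyadicDelta f Q ^ 2 * (volume Q.set).toReal :=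
              Finset.sum_le_sum_of_subset_of_nonneg himg fun Q _ _ => delta_term_nonneg f Q
          _ ≤ (B ^ 2 - dyadicAvg f T ^ 2) * (volume T.set).toReal := key N T hTgood
          _ ≤ B ^ 2 * (volume T.set).toReal := by
              apply mul_le_mul_of_nonneg_right _ (volReal_pos T).le
              nlinarith [sq_nonneg (dyadicAvg f T)]
      calc ∑ Q ∈ s, ENNReal.ofReal (dyadicDelta f (Q : DyadicCube d) ^ 2 *
            (volume (Q : DyadicCube d).set).toReal)
          = ENNReal.ofReal (∑ Q ∈ s, dyadicDelta f (Q : DyadicCube d) ^ 2 *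
            (volume (Q : DyadicCube d).set).toReal) :=
            (ENNReal.ofReal_sum_of_nonneg fun Q _ => delta_term_nonneg f _).symm
        _ ≤ ENNReal.ofReal (B ^ 2 * (volume T.set).toReal) := ENNReal.ofReal_le_ofReal hreal
        _ = ENNReal.ofReal (B ^ 2) * ENNReal.ofReal ((volume T.set).toReal) :=
            ENNReal.ofReal_mul (by positivity)
        _ = ENNReal.ofReal ((2 ^ d * lam) ^ 2) * volume T.set := by
            rw [ENNReal.ofReal_toReal (volume_lt_top T).ne, hB]

end
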